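/- Let T > 0, α > 0 and β ∈ ℝ with α + β > 0, and let c ∈ ℝ. Let h : [0,T] → ℝ be monotone nondecreasing with 0 ≤ h(t) ≤ 1 for all t ∈ [0,T], and define ν : [0,T] → ℝ by ν(s) = c − β·s + (α+β)·∫₀^s h(t) dt. Then ν(T) + ∫₀^T ν(s)·α·e^{α(T−s)} ds ≤ c·e^{αT} + (β/α)·(1 − e^{αT}) + (α+β)·h(T)·(e^{αT} − 1)/α. -/

import Mathlib

set_option maxHeartbeats 1000000


open MeasureTheory Set

/-- Key estimate in the Grönwall step of the proof of Theorem 2: explicit bound on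
`ν(T) + ∫₀^T ν(s)·α·e^{α(T−s)} ds` where `ν(s) = c − β·s + (α+β)·∫₀^s h(t) dt`. -/
theorem gronwall_step_estimate
    (T α β c : ℝ) (hT : 0 < T) (hα : 0 < α) (hαβ : 0 < α + β)
    (h : ℝ → ℝ)
    (hmono : MonotoneOn h (Icc 0 T))
    (hh0 : ∀ t ∈ Icc 0 T, 0 ≤ h t)
    (hh1 : ∀ t ∈ Icc 0 T, h t ≤ 1)
    (ν : ℝ → ℝ)
    (hν : ∀ s ∈ Icc 0 T, ν s = c - β * s + (α + β) * ∫ t in (0 : ℝ)..s, h t) :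
    ν T + ∫ s in (0 : ℝ)..T, ν s * α * Real.exp (α * (T - s))
      ≤ c * Real.exp (α * T) + (β / α) * (1 - Real.exp (α * T))
          + (α + β) * h T * (Real.exp (α * T) - 1) / α := by
  have hαβ' : (0:ℝ) ≤ α + β := hαβ.le
  set k : ℝ := (α + β) * h T - β with hk
  have hTmem : T ∈ Icc (0:ℝ) T := ⟨hT.le, le_rfl⟩
  have hint : ∀ s ∈ Icc (0:ℝ) T, IntervalIntegrable h volume 0 s := by
    intro s hs
    apply MonotoneOn.intervalIntegrable
    apply hmono.mono
    rw [uIcc_of_le hs.1]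
    exact Icc_subset_Icc le_rfl hs.2
  -- pointwise bound for the explicit formula
  have key : ∀ s ∈ Icc (0:ℝ) T,
      c - β * s + (α + β) * ∫ t in (0:ℝ)..s, h t ≤ c + k * s := by
    intro s hs
    have hb : (∫ t in (0:ℝ)..s, h t) ≤ h T * s := by
      calc (∫ t in (0:ℝ)..s, h t) ≤ ∫ _t in (0:ℝ)..s, h T := by
            apply intervalIntegral.integral_mono_on hs.1 (hint s hs)
              intervalIntegrable_const
            intro t ht
            exact hmono ⟨ht.1, ht.2.trans hs.2⟩ hTmem (ht.2.trans hs.2)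
        _ = h T * s := by simp [mul_comm]
    have hb2 := mul_le_mul_of_nonneg_left hb hαβ'
    calc c - β * s + (α + β) * ∫ t in (0:ℝ)..s, h t
        ≤ c - β * s + (α + β) * (h T * s) := by linarith
      _ = c + k * s := by rw [hk]; ring
  -- continuity facts
  have hIntIcc : IntegrableOn h (Icc 0 T) volume := by
    have := (hint T hTmem)
    have h1 : IntegrableOn h (Ioc (0:ℝ) T) volume := this.1
    refine (integrableOn_Icc_iff_integrableOn_Ioc).2 h1
  have hprimcont : ContinuousOn (fun s => ∫ t in (0:ℝ)..s, h t) (Icc 0 T) := by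
    have := intervalIntegral.continuousOn_primitive_interval (a := (0:ℝ)) (b := T)
      (μ := volume) (f := h) (by rwa [uIcc_of_le hT.le])
    rwa [uIcc_of_le hT.le] at this
  have hνexprcont : ContinuousOn
      (fun s => (c - β * s + (α + β) * ∫ t in (0:ℝ)..s, h t) * α * Real.exp (α * (T - s)))
      (Icc 0 T) := by
    apply ContinuousOn.mul
    · apply ContinuousOn.mul
      · exact (continuousOn_const.sub (continuousOn_const.mul continuousOn_id)).add
          (continuousOn_const.mul hprimcont)
      · exact continuousOn_const
    · exact (Real.continuous_exp.comp (continuous_const.mul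
        (continuous_const.sub continuous_id))).continuousOn
  have hgcont : Continuous fun s => (c + k * s) * α * Real.exp (α * (T - s)) :=
    (((continuous_const.add (continuous_const.mul continuous_id)).mul continuous_const).mul
      (Real.continuous_exp.comp (continuous_const.mul (continuous_const.sub continuous_id))))
  -- integral comparison
  have hmono2 : (∫ s in (0:ℝ)..T, ν s * α * Real.exp (α * (T - s)))
      ≤ ∫ s in (0:ℝ)..T, (c + k * s) * α * Real.exp (α * (T - s)) := by
    rw [intervalIntegral.integral_congr
      (g := fun s => (c - β * s + (α + β) * ∫ t in (0:ℝ)..s, h t) * α * Real.exp (α * (T - s)))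
      (by
        intro s hs
        rw [uIcc_of_le hT.le] at hs
        simp only
        rw [hν s hs])]
    apply intervalIntegral.integral_mono_on hT.le
    · exact ContinuousOn.intervalIntegrable (by rwa [uIcc_of_le hT.le])
    · exact hgcont.intervalIntegrable 0 T
    · intro s hs
      have hkey := key s hs
      have hpos : 0 < α * Real.exp (α * (T - s)) :=
        mul_pos hα (Real.exp_pos _)
      have := mul_le_mul_of_nonneg_right hkey hpos.le
      calc (c - β * s + (α + β) * ∫ t in (0:ℝ)..s, h t) * α * Real.exp (α * (T - s))
          = (c - β * s + (α + β) * ∫ t in (0:ℝ)..s, h t) * (α * Real.exp (α * (T - s))) := by ring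
        _ ≤ (c + k * s) * (α * Real.exp (α * (T - s))) := this
        _ = (c + k * s) * α * Real.exp (α * (T - s)) := by ring
  -- exact evaluation of the comparison integral
  have hαne : α ≠ 0 := hα.ne'
  have hE : ∀ s : ℝ, HasDerivAt (fun s => Real.exp (α * (T - s)))
      (Real.exp (α * (T - s)) * (α * (0 - 1))) s := by
    intro s
    exact (((hasDerivAt_const s T).sub (hasDerivAt_id s)).const_mul α).exp
  have hF : ∀ s : ℝ, HasDerivAt
      (fun s => -((c + k * s) * Real.exp (α * (T - s))) - k / α * Real.exp (α * (T - s)))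
      ((c + k * s) * α * Real.exp (α * (T - s))) s := by
    intro s
    have hlin : HasDerivAt (fun s => c + k * s) k s := by
      exact (((hasDerivAt_id s).const_mul k).const_add c).congr_deriv (mul_one k)
    have hmulD := (hlin.mul (hE s)).neg
    have hcm := (hE s).const_mul (k / α)
    have := hmulD.sub hcm
    refine this.congr_deriv ?_
    have hd : α / α = 1 := div_self hαne
    linear_combination (k * Real.exp (α * (T - s))) * hd
  have hEval : (∫ s in (0:ℝ)..T, (c + k * s) * α * Real.exp (α * (T - s)))
      = c * Real.exp (α * T) + k / α * (Real.exp (α * T) - 1) - (c + k * T) := by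
    rw [intervalIntegral.integral_eq_sub_of_hasDerivAt (fun s _ => hF s)
      (hgcont.intervalIntegrable 0 T)]
    simp only [sub_self, mul_zero, Real.exp_zero, mul_one, sub_zero]
    ring
  have hνT : ν T ≤ c + k * T := by
    rw [hν T hTmem]; exact key T hTmem
  have hfinal : c * Real.exp (α * T) + k / α * (Real.exp (α * T) - 1)
      = c * Real.exp (α * T) + (β / α) * (1 - Real.exp (α * T))
          + (α + β) * h T * (Real.exp (α * T) - 1) / α := by
    rw [hk]; field_simp; ring
  calc ν T + ∫ s in (0:ℝ)..T, ν s * α * Real.exp (α * (T - s))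
      ≤ (c + k * T) + ∫ s in (0:ℝ)..T, (c + k * s) * α * Real.exp (α * (T - s)) :=
        add_le_add hνT hmono2
    _ = c * Real.exp (α * T) + k / α * (Real.exp (α * T) - 1) := by rw [hEval]; ring
    _ = _ := hfinal
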